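/- Let T be an invertible measure-preserving transformation of a probability space (X,μ), let A_n ⊆ X be measurable with μ(A_n) → δ ≥ 1/k for some integer k ≥ 1, let r_n be positive integers, and let B be a measurable set. Assume ∫_{A_n} (1_B∘T^{r_n} − 1_B)² dμ → 0 and, for every measurable set C, μ(C ∩ A_n) → δ·μ(C). Then liminf_n μ(T^{r_n} B ∩ B) ≥ (δ/2)·μ(B) ≥ μ(B)/(2k). -/

import Mathlib

open MeasureTheory Filter Topology

/-- The key computation in the proof that ergodic IETs are partially rigid
(Proposition 6.8). -/
theorem stmt5 {X : Type*} [MeasurableSpace X] (μ : Measure X) [IsProbabilityMeasure μ]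
    (f : X → X) (hf : MeasurePreserving f μ μ) (hbij : Function.Bijective f)
    (k : ℕ) (hk : 1 ≤ k) (δ : ℝ) (hδ : (1:ℝ)/k ≤ δ)
    (A : ℕ → Set X) (hA : ∀ n, MeasurableSet (A n))
    (r : ℕ → ℕ) (hr : ∀ n, 0 < r n)
    (B : Set X) (hB : MeasurableSet B)
    (hAδ : Tendsto (fun n => (μ (A n)).toReal) atTop (𝓝 δ))
    (hL2 : Tendsto (fun n => ∫ x in A n,
      (B.indicator (fun _ => (1:ℝ)) (f^[r n] x) - B.indicator (fun _ => (1:ℝ)) x) ^ 2 ∂μ)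
      atTop (𝓝 0))
    (hmix : ∀ C : Set X, MeasurableSet C →
      Tendsto (fun n => (μ (C ∩ A n)).toReal) atTop (𝓝 (δ * (μ C).toReal))) :
    δ / 2 * (μ B).toReal ≤ liminf (fun n => (μ (f^[r n] '' B ∩ B)).toReal) atTop ∧
      (μ B).toReal / (2 * k) ≤ δ / 2 * (μ B).toReal := by
  have hμB : 0 ≤ (μ B).toReal := ENNReal.toReal_nonneg
  have hk' : (1:ℝ) ≤ (k:ℝ) := by exact_mod_cast hk
  have hkpos : (0:ℝ) < (k:ℝ) := lt_of_lt_of_le one_pos hk'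
  constructor
  · -- main inequality
    set w : ℕ → ℝ := fun n => (μ (f^[r n] '' B ∩ B)).toReal with hw
    set L : ℕ → ℝ := fun n =>
      ((μ (B ∩ A n)).toReal - ∫ x in A n,
        (B.indicator (fun _ => (1:ℝ)) (f^[r n] x) - B.indicator (fun _ => (1:ℝ)) x) ^ 2 ∂μ) / 2
      with hL
    have hLtendsto : Tendsto L atTop (𝓝 (δ * (μ B).toReal / 2)) := by
      have := ((hmix B hB).sub hL2).div_const 2
      simpa using this
    have hLw : ∀ n, L n ≤ w n := by
      intro n
      set g : X → X := f^[r n] with hg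
      have hgmp : MeasurePreserving g μ μ := hf.iterate (r n)
      have hgB : MeasurableSet (g ⁻¹' B) := hgmp.measurable hB
      -- compute the integral
      have hind : ∀ x, (B.indicator (fun _ => (1:ℝ)) (g x) - B.indicator (fun _ => (1:ℝ)) x) ^ 2
          = (g ⁻¹' B).indicator (fun _ => (1:ℝ)) x + B.indicator (fun _ => (1:ℝ)) x
            - 2 * ((g ⁻¹' B ∩ B).indicator (fun _ => (1:ℝ)) x) := by
        intro x
        by_cases h1 : g x ∈ B <;> by_cases h2 : x ∈ B <;>
          simp [Set.indicator_apply, Set.mem_preimage, h1, h2, Set.mem_inter_iff] <;> ring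
      have hint : ∀ (t : Set X), MeasurableSet t →
          ∫ x in A n, t.indicator (fun _ => (1:ℝ)) x ∂μ = (μ (t ∩ A n)).toReal := by
        intro t ht
        rw [setIntegral_indicator ht]
        simp [Set.inter_comm]
        rfl
      have hInt1 : Integrable ((g ⁻¹' B).indicator (fun _ => (1:ℝ))) (μ.restrict (A n)) :=
        (integrable_const (1:ℝ)).indicator hgB
      have hInt2 : Integrable (B.indicator (fun _ => (1:ℝ))) (μ.restrict (A n)) :=
        (integrable_const (1:ℝ)).indicator hB
      have hInt3 : Integrable ((g ⁻¹' B ∩ B).indicator (fun _ => (1:ℝ))) (μ.restrict (A n)) :=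
        (integrable_const (1:ℝ)).indicator (hgB.inter hB)
      have hIeq : ∫ x in A n,
          (B.indicator (fun _ => (1:ℝ)) (g x) - B.indicator (fun _ => (1:ℝ)) x) ^ 2 ∂μ
          = (μ (g ⁻¹' B ∩ A n)).toReal + (μ (B ∩ A n)).toReal
            - 2 * (μ ((g ⁻¹' B ∩ B) ∩ A n)).toReal := by
        calc ∫ x in A n,
            (B.indicator (fun _ => (1:ℝ)) (g x) - B.indicator (fun _ => (1:ℝ)) x) ^ 2 ∂μ
            = ∫ x in A n, ((g ⁻¹' B).indicator (fun _ => (1:ℝ)) x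
                + B.indicator (fun _ => (1:ℝ)) x
                - 2 * ((g ⁻¹' B ∩ B).indicator (fun _ => (1:ℝ)) x)) ∂μ := by
              exact integral_congr_ae (Filter.Eventually.of_forall fun x => hind x)
          _ = ∫ x in A n, (((g ⁻¹' B).indicator (fun _ => (1:ℝ))
                + B.indicator (fun _ => (1:ℝ))) x
                - (fun y => 2 * ((g ⁻¹' B ∩ B).indicator (fun _ => (1:ℝ)) y)) x) ∂μ := rfl
          _ = (μ (g ⁻¹' B ∩ A n)).toReal + (μ (B ∩ A n)).toReal
                - 2 * (μ ((g ⁻¹' B ∩ B) ∩ A n)).toReal := by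
              rw [integral_sub (hInt1.add hInt2) (hInt3.const_mul 2)]
              rw [show ∫ x in A n, ((g ⁻¹' B).indicator (fun _ => (1:ℝ))
                + B.indicator (fun _ => (1:ℝ))) x ∂μ
                = ∫ x in A n, ((g ⁻¹' B).indicator (fun _ => (1:ℝ)) x
                + B.indicator (fun _ => (1:ℝ)) x) ∂μ from rfl]
              rw [integral_add hInt1 hInt2, integral_const_mul 2,
                hint _ hgB, hint _ hB, hint _ (hgB.inter hB)]
      -- bound μ (g⁻¹'B ∩ B ∩ A n) by w n
      have hsub : g ⁻¹' B ∩ B ⊆ g ⁻¹' (g '' B ∩ B) := by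
        rintro x ⟨hx1, hx2⟩
        exact ⟨Set.mem_image_of_mem g hx2, hx1⟩
      have hle : μ ((g ⁻¹' B ∩ B) ∩ A n) ≤ μ (g '' B ∩ B) := by
        calc μ ((g ⁻¹' B ∩ B) ∩ A n) ≤ μ (g ⁻¹' B ∩ B) := measure_mono Set.inter_subset_left
          _ ≤ μ (g ⁻¹' (g '' B ∩ B)) := measure_mono hsub
          _ ≤ (μ.map g) (g '' B ∩ B) := Measure.le_map_apply hgmp.measurable.aemeasurable _
          _ = μ (g '' B ∩ B) := by rw [hgmp.map_eq]
      have hle' : (μ ((g ⁻¹' B ∩ B) ∩ A n)).toReal ≤ (μ (g '' B ∩ B)).toReal :=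
        ENNReal.toReal_le_toReal (measure_ne_top μ _) (measure_ne_top μ _) |>.mpr hle
      have h1nonneg : 0 ≤ (μ (g ⁻¹' B ∩ A n)).toReal := ENNReal.toReal_nonneg
      simp only [hL, hw, hg]
      rw [hIeq]
      linarith
    have hbdd : IsBoundedUnder (· ≥ ·) atTop L := hLtendsto.isBoundedUnder_ge
    have hcobdd : IsCoboundedUnder (· ≥ ·) atTop w :=
      IsBoundedUnder.isCoboundedUnder_ge (isBoundedUnder_of
        ⟨1, fun n => by
          simpa using ENNReal.toReal_le_of_le_ofReal one_pos.le
            (by simpa using prob_le_one (μ := μ) (s := f^[r n] '' B ∩ B))⟩)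
    have := liminf_le_liminf (Filter.Eventually.of_forall hLw) hbdd hcobdd
    rw [hLtendsto.liminf_eq] at this
    calc δ / 2 * (μ B).toReal = δ * (μ B).toReal / 2 := by ring
      _ ≤ liminf w atTop := this
  · rw [div_le_iff₀ (by positivity)]
    have h1 : (1:ℝ) ≤ δ * k := by
      rw [div_le_iff₀ hkpos] at hδ; linarith
    nlinarith
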